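/- Witnessed composition preserves distributional equivalence: let L be (f,h)-tuple-substitutable, let ρ be a binary linear nondeleting template with parent arity e ≤ f and child arities d_B, d_C ≤ f, and let E be a concrete arity-e sentence context with E[ρ(x,y)] ∈ L. If u ≡_L^{d_B} x and v ≡_L^{d_C} y, then ρ(u,v) ≡_L^e ρ(x,y). -/

import Mathlib

structure SContext (α : Type) (d : ℕ) where
  perm : Equiv.Perm (Fin d)
  bound : Fin (d + 1) → List α

def SContext.fill {α : Type} {d : ℕ} (E : SContext α d) (x : Fin d → List α) : List α :=
  (List.ofFn fun i : Fin d => E.bound i.castSucc ++ x (E.perm i)).flatten ++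
    E.bound (Fin.last d)

def tupleDist {α : Type} (L : Set (List α)) (d : ℕ) (x : Fin d → List α) :
    Set (SContext α d) :=
  {E | E.fill x ∈ L}

def TupleSubstitutable {α M : Type} (L : Set (List α)) (f : ℕ) (h : List α → M) : Prop :=
  ∀ d, 1 ≤ d → d ≤ f → ∀ x y : Fin d → List α,
    (∀ i, h (x i) = h (y i)) →
    (tupleDist L d x ∩ tupleDist L d y).Nonempty →
    tupleDist L d x = tupleDist L d y

/-- Typed distributional equivalence `u ≡_L^d x`. -/
def TypedEquiv {α M : Type} (L : Set (List α)) (h : List α → M) (d : ℕ)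
    (u x : Fin d → List α) : Prop :=
  (∀ i, h (u i) = h (x i)) ∧ tupleDist L d u = tupleDist L d x

abbrev Tmpl (α : Type) (dB dC e : ℕ) := Fin e → List (α ⊕ (Fin dB ⊕ Fin dC))

/-- Simultaneous substitution `ρ(u,v)`. -/
def substT {α : Type} {dB dC e : ℕ} (tmpl : Tmpl α dB dC e)
    (u : Fin dB → List α) (v : Fin dC → List α) : Fin e → List α :=
  fun j => (tmpl j).flatMap fun s =>
    match s with
    | Sum.inl a => [a]
    | Sum.inr (Sum.inl i) => u i
    | Sum.inr (Sum.inr i) => v i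

namespace WCPE14

variable {α β γ : Type}

instance sumLawfulBEq {α β : Type} [BEq α] [BEq β] [LawfulBEq α] [LawfulBEq β] :
    LawfulBEq (α ⊕ β) where
  eq_of_beq {a b} hh := by
    cases a with
    | inl a =>
        cases b with
        | inl b => exact congrArg Sum.inl (eq_of_beq (show (a == b) = true from hh))
        | inr b => exact Bool.noConfusion (show (false = true) from hh)
    | inr a =>
        cases b with
        | inl b => exact Bool.noConfusion (show (false = true) from hh)
        | inr b => exact congrArg Sum.inr (eq_of_beq (show (a == b) = true from hh))
  rfl {a} := by
    cases a with
    | inl a => exact (show (Sum.inl a == Sum.inl a) = (a == a) from rfl).trans (beq_self_eq_true a)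
    | inr a => exact (show (Sum.inr a == Sum.inr a) = (a == a) from rfl).trans (beq_self_eq_true a)

/-- Fill a linear template word with variable values. -/
def fillw (w : β → List α) : α ⊕ β → List α := Sum.elim (fun a => [a]) w

/-- Parse a template word into (initial constant block, list of (variable, following
constant block) pairs). -/
def parseP : List (α ⊕ β) → List α × List (β × List α)
  | [] => ([], [])
  | .inl a :: s => (a :: (parseP s).1, (parseP s).2)
  | .inr i :: s => ([], (i, (parseP s).1) :: (parseP s).2)

lemma parseP_reconstruct (w : β → List α) :
    ∀ s : List (α ⊕ β),
      s.flatMap (fillw w) = (parseP s).1 ++ (parseP s).2.flatMap (fun ic => w ic.1 ++ ic.2)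
  | [] => rfl
  | .inl a :: s => by
      rw [List.flatMap_cons, parseP_reconstruct w s]
      simp [parseP, fillw]
  | .inr i :: s => by
      rw [List.flatMap_cons, parseP_reconstruct w s]
      simp [parseP, fillw]

lemma parseP_fst (s : List (α ⊕ β)) :
    (parseP s).2.map Prod.fst = s.filterMap Sum.getRight? := by
  induction s with
  | nil => rfl
  | cons c s ih => cases c <;> simp [parseP, ih, List.filterMap_cons]

lemma count_filterMap_getRight [DecidableEq α] [DecidableEq β] (i : β) (s : List (α ⊕ β)) :
    (s.filterMap Sum.getRight?).count i = s.count (Sum.inr i) := by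
  induction s with
  | nil => rfl
  | cons c s ih =>
      cases c with
      | inl a =>
          rw [List.filterMap_cons, Sum.getRight?_inl, List.count_cons_of_ne (by simp)]
          exact ih
      | inr j =>
          rw [List.filterMap_cons, Sum.getRight?_inr]
          rcases eq_or_ne i j with rfl | hne
          · rw [List.count_cons_self, List.count_cons_self, ih]
          · rw [List.count_cons_of_ne (Ne.symm hne), List.count_cons_of_ne (by simpa using Ne.symm hne), ih]

lemma inter (w : β → List α) :
    ∀ (P : List (β × List α)) (c0 : List α),
      (List.ofFn fun k : Fin P.length =>
          (c0 :: P.map Prod.snd).getD k.val [] ++ w (P.get k).1).flatten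
        ++ (c0 :: P.map Prod.snd).getD P.length []
      = c0 ++ P.flatMap (fun ic => w ic.1 ++ ic.2)
  | [], c0 => by simp
  | (i, c) :: P, c0 => by
      have ih := inter w P c
      rw [List.ofFn_succ]
      simp only [List.map_cons, List.length_cons, Fin.val_zero, List.getD_cons_zero,
        Fin.val_succ, List.getD_cons_succ, List.get_eq_getElem, List.getElem_cons_zero,
        List.getElem_cons_succ, List.flatten_cons, List.flatMap_cons, List.append_assoc]
      simp only [List.get_eq_getElem] at ih
      rw [ih]

/-- Any linear template word (each variable occurring exactly once) is realized
by a sentence context. -/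
lemma existsSContext {α : Type} [DecidableEq α] {d : ℕ} (s : List (α ⊕ Fin d))
    (hc : ∀ i, s.count (Sum.inr i) = 1) :
    ∃ E : SContext α d, ∀ w, E.fill w = s.flatMap (fillw w) := by
  classical
  set c0 := (parseP s).1 with hc0
  set P := (parseP s).2 with hP
  have hcount : ∀ i, (P.map Prod.fst).count i = 1 := by
    intro i
    rw [hP, parseP_fst, count_filterMap_getRight]
    exact hc i
  have hperm : (P.map Prod.fst).Perm (List.finRange d) := by
    rw [List.perm_iff_count]
    intro a
    rw [hcount a, List.count_eq_one_of_mem (List.nodup_finRange d) (List.mem_finRange a)]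
  have hlen : P.length = d := by
    have := hperm.length_eq
    simpa using this
  have hnd : (P.map Prod.fst).Nodup := by
    rw [List.nodup_iff_count_le_one]
    intro a
    rw [hcount a]
  have hlt : ∀ k : Fin d, (k : ℕ) < (P.map Prod.fst).length := by
    intro k
    rw [List.length_map, hlen]
    exact k.isLt
  have hFinj : Function.Injective (fun k : Fin d => (P.map Prod.fst)[(k : ℕ)]'(hlt k)) := by
    intro k₁ k₂ hk
    exact Fin.ext ((hnd.getElem_inj_iff).mp hk)
  refine ⟨⟨Equiv.ofBijective _ (Finite.injective_iff_bijective.mp hFinj),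
      fun kk => (c0 :: P.map Prod.snd).getD kk []⟩, ?_⟩
  intro w
  rw [parseP_reconstruct w s, ← hc0, ← hP, ← inter w P c0]
  show (List.ofFn fun k : Fin d => (c0 :: P.map Prod.snd).getD k.castSucc []
        ++ w ((P.map Prod.fst)[(k : ℕ)]'(hlt k))).flatten
      ++ (c0 :: P.map Prod.snd).getD (Fin.last d) [] = _
  congr 1
  · rw [List.ofFn_congr hlen.symm]
    refine congrArg List.flatten (congrArg List.ofFn (funext fun k => ?_))
    simp [List.get_eq_getElem, List.getElem_map, Fin.coe_castSucc, Fin.coe_cast]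
  · simp [Fin.val_last, hlen]

/-- The composed concrete context word obtained by substituting `tmpl` into `E`
and then applying `g` to the symbols of `tmpl`. -/
def sGen {α γ β : Type} {e : ℕ} (E : SContext α e) (tmpl : Fin e → List (α ⊕ γ))
    (g : α ⊕ γ → List (α ⊕ β)) : List (α ⊕ β) :=
  ((List.finRange e).flatMap fun i =>
      (E.bound i.castSucc).map Sum.inl ++ (tmpl (E.perm i)).flatMap g)
    ++ (E.bound (Fin.last e)).map Sum.inl

lemma flatMap_map_inl (w : β → List α) (c : List α) :
    (c.map Sum.inl).flatMap (fillw w) = c := by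
  induction c with
  | nil => rfl
  | cons a c ih =>
      rw [List.map_cons, List.flatMap_cons, ih]
      rfl

lemma flatten_ofFn {n : ℕ} (G : Fin n → List α) :
    (List.ofFn G).flatten = (List.finRange n).flatMap G := by
  rw [List.ofFn_eq_map, ← List.flatMap_def]

lemma fill_sGen {e : ℕ} (E : SContext α e) (tmpl : Fin e → List (α ⊕ γ))
    (g : α ⊕ γ → List (α ⊕ β)) (w : β → List α) :
    (sGen E tmpl g).flatMap (fillw w)
      = E.fill fun j => (tmpl j).flatMap fun c => (g c).flatMap (fillw w) := by
  unfold sGen SContext.fill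
  rw [List.flatMap_append, flatMap_map_inl, List.flatMap_assoc, flatten_ofFn]
  congr 1
  exact congrArg (List.finRange e).flatMap (funext fun i => by
    rw [List.flatMap_append, flatMap_map_inl, List.flatMap_assoc])

lemma count_sGen [DecidableEq α] [DecidableEq β] [DecidableEq γ] {e : ℕ}
    (E : SContext α e) (tmpl : Fin e → List (α ⊕ γ)) (g : α ⊕ γ → List (α ⊕ β))
    (j : β) (c₀ : α ⊕ γ)
    (hg : ∀ c, (g c).count (Sum.inr j) = if c = c₀ then 1 else 0) :
    (sGen E tmpl g).count (Sum.inr j) = ∑ i, (tmpl i).count c₀ := by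
  have hmap : ∀ c : List α, (c.map Sum.inl).count (Sum.inr j : α ⊕ β) = 0 := by
    intro c
    rw [List.count_eq_zero]
    intro hmem
    simp at hmem
  have hflat : ∀ t : List (α ⊕ γ), (t.flatMap g).count (Sum.inr j) = t.count c₀ := by
    intro t
    induction t with
    | nil => rfl
    | cons c t ih =>
        rw [List.flatMap_cons, List.count_append, ih, hg c]
        rcases eq_or_ne c c₀ with rfl | hne
        · rw [if_pos rfl, List.count_cons_self, Nat.add_comm]
        · rw [if_neg hne, List.count_cons_of_ne hne, Nat.zero_add]
  unfold sGen
  rw [List.count_append, hmap, Nat.add_zero, List.count_flatMap]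
  have heq : ∀ i ∈ List.finRange e,
      (List.count (Sum.inr j : α ⊕ β) ∘ fun i =>
        (E.bound i.castSucc).map Sum.inl ++ (tmpl (E.perm i)).flatMap g) i
      = (fun i => (tmpl (E.perm i)).count c₀) i := by
    intro i _
    simp only [Function.comp_apply, List.count_append, hmap, hflat, Nat.zero_add]
  rw [List.map_congr_left heq, ← Fin.sum_univ_def]
  exact Equiv.sum_comp E.perm fun i => (tmpl i).count c₀

lemma count_congr_beq {δ : Type} {i1 i2 : BEq δ} (h1 : @LawfulBEq δ i1) (h2 : @LawfulBEq δ i2)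
    (a : δ) (l : List δ) : @List.count δ i1 a l = @List.count δ i2 a l := by
  induction l with
  | nil => rfl
  | cons c l ih =>
      rcases eq_or_ne a c with rfl | hne
      · rw [@List.count_cons_self δ i1 h1, @List.count_cons_self δ i2 h2, ih]
      · rw [@List.count_cons_of_ne δ i1 h1 _ _ (Ne.symm hne), @List.count_cons_of_ne δ i2 h2 _ _ (Ne.symm hne), ih]

lemma h_flatMap_congr {M : Type} [Monoid M] (h : List α → M)
    (hmul : ∀ a b : List α, h (a ++ b) = h a * h b)
    (F G : γ → List α) :
    ∀ l : List γ, (∀ c ∈ l, h (F c) = h (G c)) → h (l.flatMap F) = h (l.flatMap G)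
  | [], _ => rfl
  | c :: l, hl => by
      rw [List.flatMap_cons, List.flatMap_cons, hmul, hmul, hl c List.mem_cons_self,
        h_flatMap_congr h hmul F G l (fun c hc => hl c (List.mem_cons_of_mem _ hc))]

/-- The symbol-translation for the B-side induced context. -/
def gB {α : Type} {dB dC : ℕ} (y : Fin dC → List α) :
    α ⊕ (Fin dB ⊕ Fin dC) → List (α ⊕ Fin dB)
  | .inl a => [Sum.inl a]
  | .inr (.inl i) => [Sum.inr i]
  | .inr (.inr k) => (y k).map Sum.inl

/-- The symbol-translation for the C-side induced context. -/
def gC {α : Type} {dB dC : ℕ} (u : Fin dB → List α) :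
    α ⊕ (Fin dB ⊕ Fin dC) → List (α ⊕ Fin dC)
  | .inl a => [Sum.inl a]
  | .inr (.inl i) => (u i).map Sum.inl
  | .inr (.inr k) => [Sum.inr k]

end WCPE14

open WCPE14 in
/-- Witnessed composition preserves distributional equivalence: for an
`(f,h)`-tuple-substitutable `L`, a binary linear nondeleting template `ρ` with parent
arity `e ≤ f` and child arities `d_B, d_C ≤ f`, and a concrete arity-`e` context `E`
with `E[ρ(x,y)] ∈ L`, if `u ≡_L^{d_B} x` and `v ≡_L^{d_C} y` then
`ρ(u,v) ≡_L^e ρ(x,y)`. -/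
theorem witnessed_composition_preserves_equiv {α M : Type} [DecidableEq α]
    [Monoid M] [Fintype M]
    (L : Set (List α)) (f : ℕ) (h : List α → M)
    (hnil : h [] = 1) (hmul : ∀ a b : List α, h (a ++ b) = h a * h b)
    (hsub : TupleSubstitutable L f h)
    {dB dC e : ℕ} (he1 : 1 ≤ e) (hef : e ≤ f) (hBf : dB ≤ f) (hCf : dC ≤ f)
    (tmpl : Tmpl α dB dC e)
    (hx : ∀ i : Fin dB, (∑ j, (tmpl j).count (Sum.inr (Sum.inl i))) = 1)
    (hy : ∀ i : Fin dC, (∑ j, (tmpl j).count (Sum.inr (Sum.inr i))) = 1)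
    (x u : Fin dB → List α) (y v : Fin dC → List α)
    (E : SContext α e) (hE : E.fill (substT tmpl x y) ∈ L)
    (hux : TypedEquiv L h dB u x) (hvy : TypedEquiv L h dC v y) :
    TypedEquiv L h e (substT tmpl u v) (substT tmpl x y) := by
  classical
  -- componentwise h-types agree
  have hty : ∀ j, h (substT tmpl u v j) = h (substT tmpl x y j) := by
    intro j
    apply h_flatMap_congr h hmul
    intro c _
    rcases c with a | (i | k)
    · rfl
    · exact hux.1 i
    · exact hvy.1 k
  -- the B-side induced context
  have hgB : ∀ j : Fin dB, ∀ c, ((gB y : α ⊕ (Fin dB ⊕ Fin dC) → _) c).count (Sum.inr j)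
      = if c = Sum.inr (Sum.inl j) then 1 else 0 := by
    intro j c
    rcases c with a | (i | k)
    · rw [if_neg (by simp), gB, List.count_eq_zero]
      simp
    · rcases eq_or_ne i j with rfl | hne
      · rw [if_pos rfl, gB, List.count_cons_self, List.count_nil]
      · rw [if_neg (by simp [hne]), gB,
          List.count_cons_of_ne (by simpa using hne), List.count_nil]
    · rw [if_neg (by simp), gB, List.count_eq_zero]
      simp
  have hcB : ∀ j : Fin dB, (sGen E tmpl (gB y)).count (Sum.inr j) = 1 := by
    intro j
    rw [count_sGen E tmpl (gB y) j (Sum.inr (Sum.inl j)) (hgB j)]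
    refine Eq.trans (Finset.sum_congr rfl fun i _ => ?_) (hx j)
    exact count_congr_beq inferInstance inferInstance _ _
  obtain ⟨EB, hEB⟩ := existsSContext (sGen E tmpl (gB y)) hcB
  have hEB' : ∀ w, EB.fill w = E.fill (substT tmpl w y) := by
    intro w
    rw [hEB w, fill_sGen]
    refine congrArg E.fill (funext fun j => ?_)
    refine congrArg (tmpl j).flatMap (funext fun c => ?_)
    rcases c with a | (i | k)
    · simp [gB, fillw]
    · simp [gB, fillw]
    · exact flatMap_map_inl w (y k)
  -- transfer along u ≡ x
  have huy : E.fill (substT tmpl u y) ∈ L := by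
    rw [← hEB' u]
    have hmemB : EB ∈ tupleDist L dB x := by
      show EB.fill x ∈ L
      rw [hEB' x]
      exact hE
    have : EB ∈ tupleDist L dB u := by rw [hux.2]; exact hmemB
    exact this
  -- the C-side induced context
  have hgC : ∀ j : Fin dC, ∀ c, ((gC u : α ⊕ (Fin dB ⊕ Fin dC) → _) c).count (Sum.inr j)
      = if c = Sum.inr (Sum.inr j) then 1 else 0 := by
    intro j c
    rcases c with a | (i | k)
    · rw [if_neg (by simp), gC, List.count_eq_zero]
      simp
    · rw [if_neg (by simp), gC, List.count_eq_zero]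
      simp
    · rcases eq_or_ne k j with rfl | hne
      · rw [if_pos rfl, gC, List.count_cons_self, List.count_nil]
      · rw [if_neg (by simp [hne]), gC,
          List.count_cons_of_ne (by simpa using hne), List.count_nil]
  have hcC : ∀ j : Fin dC, (sGen E tmpl (gC u)).count (Sum.inr j) = 1 := by
    intro j
    rw [count_sGen E tmpl (gC u) j (Sum.inr (Sum.inr j)) (hgC j)]
    refine Eq.trans (Finset.sum_congr rfl fun i _ => ?_) (hy j)
    exact count_congr_beq inferInstance inferInstance _ _
  obtain ⟨EC, hEC⟩ := existsSContext (sGen E tmpl (gC u)) hcC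
  have hEC' : ∀ w, EC.fill w = E.fill (substT tmpl u w) := by
    intro w
    rw [hEC w, fill_sGen]
    refine congrArg E.fill (funext fun j => ?_)
    refine congrArg (tmpl j).flatMap (funext fun c => ?_)
    rcases c with a | (i | k)
    · simp [gC, fillw]
    · exact flatMap_map_inl w (u i)
    · simp [gC, fillw]
  -- transfer along v ≡ y
  have huv : E.fill (substT tmpl u v) ∈ L := by
    rw [← hEC' v]
    have hmemC : EC ∈ tupleDist L dC y := by
      show EC.fill y ∈ L
      rw [hEC' y]
      exact huy
    have : EC ∈ tupleDist L dC v := by rw [hvy.2]; exact hmemC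
    exact this
  exact ⟨hty, hsub e he1 hef _ _ hty ⟨E, huv, hE⟩⟩
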